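/- Let G be a partial cube and E_i a Θ-class of G. If the half-carriers N⁺(E_i) and N⁻(E_i) are isometric subgraphs of G, then the carrier N(E_i) and the extended halfspaces G_i⁺ ∪ N⁻(E_i) and G_i⁻ ∪ N⁺(E_i) are isometric subgraphs of G. -/

import Mathlib

open Finset

/-- The hypercube graph on subsets of `Fin m`. -/
def cubeGraph (m : ℕ) : SimpleGraph (Finset (Fin m)) where
  Adj A B := (symmDiff A B).card = 1
  symm := ⟨fun A B h => by show (symmDiff B A).card = 1; rwa [symmDiff_comm]⟩
  loopless := ⟨fun A h => by simp only [symmDiff_self, bot_eq_empty, card_empty] at h; exact absurd h (by norm_num)⟩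

/-- `V` is (the vertex set of) a partial cube isometrically embedded in `Q_m`:
the distance in the induced subgraph equals the Hamming distance. -/
def IsPC {m : ℕ} (V : Set (Finset (Fin m))) : Prop :=
  ∀ u v : V, ((cubeGraph m).induce V).dist u v = (symmDiff u.1 v.1).card

def Shatters {m : ℕ} (V : Set (Finset (Fin m))) (Y : Finset (Fin m)) : Prop :=
  ∀ Z ⊆ Y, ∃ B ∈ V, B ∩ Y = Z

def VCdimLE {m : ℕ} (V : Set (Finset (Fin m))) (d : ℕ) : Prop :=
  ∀ Y : Finset (Fin m), Shatters V Y → Y.card ≤ d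

inductive PCStep {m : ℕ} : Set (Finset (Fin m)) → Set (Finset (Fin m)) → Prop
  | contract (i : Fin m) (V : Set (Finset (Fin m))) :
      PCStep V ((fun B => B.erase i) '' V)
  | restrictPos (i : Fin m) (V : Set (Finset (Fin m))) :
      PCStep V {B ∈ V | i ∈ B}
  | restrictNeg (i : Fin m) (V : Set (Finset (Fin m))) :
      PCStep V {B ∈ V | i ∉ B}

/-- Partial-cube minor relation: a sequence of contractions and restrictions. -/
def PCMinor {m : ℕ} : Set (Finset (Fin m)) → Set (Finset (Fin m)) → Prop :=
  Relation.ReflTransGen PCStep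

/-- `W` is (the vertex set of) a `k`-dimensional subcube of `Q_m`. -/
def IsCubeFam {m : ℕ} (k : ℕ) (W : Set (Finset (Fin m))) : Prop :=
  ∃ (Y X : Finset (Fin m)), Disjoint Y X ∧ X.card = k ∧
    W = {B | ∃ Z ⊆ X, B = Y ∪ Z}

/-- `G` has the cube `Q_k` as a pc-minor. -/
def HasQMinor {m : ℕ} (V : Set (Finset (Fin m))) (k : ℕ) : Prop :=
  ∃ W, PCMinor V W ∧ IsCubeFam k W

def hdist {m : ℕ} (A B : Finset (Fin m)) : ℕ := (symmDiff A B).card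

def IsConvexIn {m : ℕ} (V S : Set (Finset (Fin m))) : Prop :=
  S ⊆ V ∧ ∀ u ∈ S, ∀ v ∈ S, ∀ x ∈ V, hdist u x + hdist x v = hdist u v → x ∈ S

def convexHullIn {m : ℕ} (V S : Set (Finset (Fin m))) : Set (Finset (Fin m)) :=
  ⋂₀ {T | S ⊆ T ∧ IsConvexIn V T}

def IsGatedIn {m : ℕ} (V S : Set (Finset (Fin m))) : Prop :=
  S ⊆ V ∧ ∀ x ∈ V, ∃ g ∈ S, ∀ y ∈ S, hdist x g + hdist g y = hdist x y

/-- The standardly embedded full subdivision `SK_n` in `Q_n`: singletons and pairs. -/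
def SKset (n : ℕ) : Set (Finset (Fin n)) := {B | B.card = 1 ∨ B.card = 2}

/-- A standardly embedded copy of `SK_n` in `Q_m` along the injection `ι`. -/
def skCopy {m : ℕ} (n : ℕ) (ι : Fin n → Fin m) : Set (Finset (Fin m)) :=
  (fun B => B.image ι) '' SKset n


def IsConvexCycle {m : ℕ} (V C : Set (Finset (Fin m))) : Prop :=
  IsConvexIn V C ∧ ∃ k, 3 ≤ k ∧
    Nonempty (((cubeGraph m).induce C) ≃g SimpleGraph.cycleGraph k)

/-- `C` is crossed by the Θ-class `E_i`. -/
def CrossedBy {m : ℕ} (i : Fin m) (C : Set (Finset (Fin m))) : Prop :=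
  ∃ B, i ∉ B ∧ B ∈ C ∧ insert i B ∈ C

/-- The carrier `N(E_i)`: union of all cells (edges of `E_i` and convex cycles)
crossed by `E_i`. -/
def carrier {m : ℕ} (V : Set (Finset (Fin m))) (i : Fin m) : Set (Finset (Fin m)) :=
  {B ∈ V | ((i ∉ B ∧ insert i B ∈ V) ∨ (i ∈ B ∧ B.erase i ∈ V)) ∨
    ∃ C, IsConvexCycle V C ∧ CrossedBy i C ∧ B ∈ C}

section Aux

open SimpleGraph

variable {m : ℕ}

lemma hdist_self (A : Finset (Fin m)) : hdist A A = 0 := by simp [hdist]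

lemma hdist_comm (A B : Finset (Fin m)) : hdist A B = hdist B A := by
  unfold hdist; rw [symmDiff_comm]

lemma hdist_eq_zero {A B : Finset (Fin m)} (h : hdist A B = 0) : A = B := by
  unfold hdist at h
  rw [Finset.card_eq_zero] at h
  exact symmDiff_eq_bot.mp (by rw [bot_eq_empty]; exact h)

lemma symmDiff_subset_union (A B C : Finset (Fin m)) :
    symmDiff A C ⊆ symmDiff A B ∪ symmDiff B C := by
  intro j hj
  simp only [Finset.mem_symmDiff, Finset.mem_union] at *
  tauto

lemma hdist_tri (A B C : Finset (Fin m)) : hdist A C ≤ hdist A B + hdist B C :=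
  le_trans (Finset.card_le_card (symmDiff_subset_union A B C)) (Finset.card_union_le _ _)

lemma hdist_pos {i : Fin m} {A B : Finset (Fin m)} (hi : i ∈ A) (hni : i ∉ B) :
    0 < hdist A B :=
  Finset.card_pos.mpr ⟨i, Finset.mem_symmDiff.mpr (Or.inl ⟨hi, hni⟩)⟩

lemma cross_eq {i : Fin m} {A B : Finset (Fin m)} (h : hdist A B = 1) (hi : i ∈ A)
    (hni : i ∉ B) : B = A.erase i := by
  obtain ⟨j, hj⟩ := Finset.card_eq_one.mp h
  have hij : i = j := by
    have hmem : i ∈ symmDiff A B := Finset.mem_symmDiff.mpr (Or.inl ⟨hi, hni⟩)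
    rw [hj] at hmem
    exact Finset.mem_singleton.mp hmem
  subst hij
  have hms : ∀ k, (k ∈ A ∧ k ∉ B ∨ k ∈ B ∧ k ∉ A) ↔ k = i := by
    intro k
    rw [← Finset.mem_symmDiff, hj, Finset.mem_singleton]
  ext k
  rw [Finset.mem_erase]
  by_cases hk : k = i
  · subst hk; simp [hni]
  · have := hms k
    tauto

lemma cross_eq' {i : Fin m} {A B : Finset (Fin m)} (h : hdist A B = 1) (hni : i ∉ A)
    (hi : i ∈ B) : B = insert i A := by
  have hBA : A = B.erase i := cross_eq (by rw [hdist_comm]; exact h) hi hni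
  rw [hBA, Finset.insert_erase hi]

lemma subset_erase_side {i : Fin m} {u v : Finset (Fin m)} (hu : i ∈ u) (hv : i ∈ v) :
    symmDiff u v ⊆ symmDiff (u.erase i) v := by
  intro j hj
  rw [Finset.mem_symmDiff] at hj ⊢
  rcases hj with ⟨h1, h2⟩ | ⟨h1, h2⟩
  · exact Or.inl ⟨Finset.mem_erase.mpr ⟨fun h => h2 (h ▸ hv), h1⟩, h2⟩
  · exact Or.inr ⟨h1, fun h => h2 (Finset.mem_erase.mp h).2⟩

lemma subset_insert_side {i : Fin m} {u v : Finset (Fin m)} (hu : i ∉ u) (hv : i ∉ v) :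
    symmDiff u v ⊆ symmDiff (insert i u) v := by
  intro j hj
  rw [Finset.mem_symmDiff] at hj ⊢
  rcases hj with ⟨h1, h2⟩ | ⟨h1, h2⟩
  · exact Or.inl ⟨Finset.mem_insert_of_mem h1, h2⟩
  · have hji : j ≠ i := fun h => hv (h ▸ h1)
    exact Or.inr ⟨h1, fun h => h2 ((Finset.mem_insert.mp h).resolve_left hji)⟩

lemma walk_len_ge {S : Set (Finset (Fin m))} {u v : ↥S}
    (w : ((cubeGraph m).induce S).Walk u v) : hdist u.1 v.1 ≤ w.length := by
  induction w with
  | nil => simp [hdist_self]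
  | @cons a b c h w ih =>
      have h1 : hdist a.1 b.1 = 1 := h
      calc hdist a.1 c.1 ≤ hdist a.1 b.1 + hdist b.1 c.1 := hdist_tri _ _ _
        _ ≤ 1 + w.length := by rw [h1]; exact Nat.add_le_add_left ih 1
        _ = w.length + 1 := by omega

/-- Inclusion homomorphism between induced subgraphs. -/
def incHom {S T : Set (Finset (Fin m))} (h : S ⊆ T) :
    (cubeGraph m).induce S →g (cubeGraph m).induce T :=
  ⟨Set.inclusion h, fun {a b} hab => hab⟩

lemma walk_mono {S T : Set (Finset (Fin m))} (hST : S ⊆ T) {x y : Finset (Fin m)}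
    (hx : x ∈ S) (hy : y ∈ S)
    (h : ∃ w : ((cubeGraph m).induce S).Walk ⟨x, hx⟩ ⟨y, hy⟩, w.length = hdist x y)
    (hx' : x ∈ T) (hy' : y ∈ T) :
    ∃ w : ((cubeGraph m).induce T).Walk ⟨x, hx'⟩ ⟨y, hy'⟩, w.length = hdist x y := by
  obtain ⟨w, hw⟩ := h
  refine ⟨(w.map (incHom hST)).copy (Subtype.ext rfl) (Subtype.ext rfl), ?_⟩
  rw [SimpleGraph.Walk.length_copy, SimpleGraph.Walk.length_map, hw]

lemma dist_of_walk {S : Set (Finset (Fin m))} {u v : ↥S}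
    (w : ((cubeGraph m).induce S).Walk u v) (hw : w.length = hdist u.1 v.1) :
    ((cubeGraph m).induce S).dist u v = (symmDiff u.1 v.1).card := by
  have h1 : ((cubeGraph m).induce S).dist u v ≤ hdist u.1 v.1 := hw ▸ SimpleGraph.dist_le w
  obtain ⟨w', hw'⟩ := w.reachable.exists_walk_length_eq_dist
  have h2 : hdist u.1 v.1 ≤ ((cubeGraph m).induce S).dist u v := hw' ▸ walk_len_ge w'
  exact le_antisymm h1 h2

lemma exists_geodesic {W : Set (Finset (Fin m))} (hW : IsPC W) {x y : Finset (Fin m)}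
    (hx : x ∈ W) (hy : y ∈ W) :
    ∃ w : ((cubeGraph m).induce W).Walk ⟨x, hx⟩ ⟨y, hy⟩, w.length = hdist x y := by
  by_cases hxy : x = y
  · subst hxy
    exact ⟨SimpleGraph.Walk.nil, by simp [hdist_self]⟩
  · have hd := hW ⟨x, hx⟩ ⟨y, hy⟩
    have hne : hdist x y ≠ 0 := fun h => hxy (hdist_eq_zero h)
    have hr : ((cubeGraph m).induce W).Reachable ⟨x, hx⟩ ⟨y, hy⟩ := by
      by_contra hnr
      have h0 : ((cubeGraph m).induce W).dist ⟨x, hx⟩ ⟨y, hy⟩ = 0 :=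
        SimpleGraph.dist_eq_zero_iff_eq_or_not_reachable.mpr (Or.inr hnr)
      rw [h0] at hd
      exact hne (hd.symm)
    obtain ⟨w, hw⟩ := hr.exists_walk_length_eq_dist
    exact ⟨w, by rw [hw, hd]; rfl⟩

lemma first_step {V : Set (Finset (Fin m))} (hV : IsPC V) {x y : Finset (Fin m)}
    (hx : x ∈ V) (hy : y ∈ V) (hxy : x ≠ y) :
    ∃ x' ∈ V, hdist x x' = 1 ∧ hdist x' y + 1 = hdist x y := by
  obtain ⟨w, hw⟩ := exists_geodesic hV hx hy
  have hnn : ¬ w.Nil := by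
    rw [SimpleGraph.Walk.nil_iff_length_eq, hw]
    exact fun h => hxy (hdist_eq_zero h)
  obtain ⟨x', ha, w', rfl⟩ := SimpleGraph.Walk.not_nil_iff.mp hnn
  have h1 : hdist x x'.1 = 1 := ha
  have h2 : hdist x'.1 y ≤ w'.length := walk_len_ge w'
  have h3 : hdist x y ≤ hdist x x'.1 + hdist x'.1 y := hdist_tri _ _ _
  rw [SimpleGraph.Walk.length_cons] at hw
  exact ⟨x'.1, x'.2, h1, by omega⟩

lemma walk_decomp {V : Set (Finset (Fin m))} {i : Fin m} {x y : ↥V}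
    (w : ((cubeGraph m).induce V).Walk x y) :
    i ∈ x.1 → i ∉ y.1 →
    ∃ (a b : ↥V) (w1 : ((cubeGraph m).induce V).Walk x a)
      (w2 : ((cubeGraph m).induce V).Walk b y),
      hdist a.1 b.1 = 1 ∧ i ∈ a.1 ∧ i ∉ b.1 ∧ w1.length + 1 + w2.length = w.length := by
  induction w with
  | nil => intro h1 h2; exact absurd h1 h2
  | @cons a b c h w ih =>
      intro hx hy
      by_cases hz : i ∈ b.1
      · obtain ⟨p, q, w1, w2, hpq, hp, hq, hlen⟩ := ih hz hy
        refine ⟨p, q, SimpleGraph.Walk.cons h w1, w2, hpq, hp, hq, ?_⟩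
        rw [SimpleGraph.Walk.length_cons, SimpleGraph.Walk.length_cons]
        omega
      · exact ⟨a, b, SimpleGraph.Walk.nil, w, h, hx, hz, by
          rw [SimpleGraph.Walk.length_cons]; simp; omega⟩

section Main

variable {m : ℕ} {i : Fin m} {V : Set (Finset (Fin m))}

lemma carrier_cross (hV : IsPC V)
    (hplus : IsPC (carrier V i ∩ {B | i ∈ B}))
    (hminus : IsPC (carrier V i ∩ {B | i ∉ B}))
    {x y : Finset (Fin m)} (hx : x ∈ carrier V i) (hy : y ∈ carrier V i)
    (hxi : i ∈ x) (hyi : i ∉ y) :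
    ∃ w : ((cubeGraph m).induce (carrier V i)).Walk ⟨x, hx⟩ ⟨y, hy⟩,
      w.length = hdist x y := by
  obtain ⟨w, hw⟩ := exists_geodesic hV hx.1 hy.1
  obtain ⟨a, b, w1, w2, hab, ha, hb, hlen⟩ := walk_decomp (i := i) w hxi hyi
  have h1 : hdist x a.1 ≤ w1.length := walk_len_ge w1
  have h2 : hdist b.1 y ≤ w2.length := walk_len_ge w2
  have h3 : hdist x y ≤ hdist x a.1 + (hdist a.1 b.1 + hdist b.1 y) :=
    le_trans (hdist_tri x a.1 y) (Nat.add_le_add_left (hdist_tri _ _ _) _)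
  have hba : b.1 = a.1.erase i := cross_eq hab ha hb
  have haC : a.1 ∈ carrier V i :=
    ⟨a.2, Or.inl (Or.inr ⟨ha, by rw [← hba]; exact b.2⟩)⟩
  have hbC : b.1 ∈ carrier V i :=
    ⟨b.2, Or.inl (Or.inl ⟨hb, by rw [hba, Finset.insert_erase ha]; exact a.2⟩)⟩
  obtain ⟨wA, hwA⟩ := walk_mono Set.inter_subset_left ⟨hx, hxi⟩ ⟨haC, ha⟩
    (exists_geodesic hplus ⟨hx, hxi⟩ ⟨haC, ha⟩) hx haC
  obtain ⟨wB, hwB⟩ := walk_mono Set.inter_subset_left ⟨hbC, hb⟩ ⟨hy, hyi⟩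
    (exists_geodesic hminus ⟨hbC, hb⟩ ⟨hy, hyi⟩) hbC hy
  have hadj : ((cubeGraph m).induce (carrier V i)).Adj ⟨a.1, haC⟩ ⟨b.1, hbC⟩ := hab
  refine ⟨wA.append (SimpleGraph.Walk.cons hadj wB), ?_⟩
  rw [SimpleGraph.Walk.length_append, SimpleGraph.Walk.length_cons, hwA, hwB]
  omega

lemma carrier_walk (hV : IsPC V)
    (hplus : IsPC (carrier V i ∩ {B | i ∈ B}))
    (hminus : IsPC (carrier V i ∩ {B | i ∉ B}))
    {x y : Finset (Fin m)} (hx : x ∈ carrier V i) (hy : y ∈ carrier V i) :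
    ∃ w : ((cubeGraph m).induce (carrier V i)).Walk ⟨x, hx⟩ ⟨y, hy⟩,
      w.length = hdist x y := by
  by_cases hxi : i ∈ x <;> by_cases hyi : i ∈ y
  · exact walk_mono Set.inter_subset_left ⟨hx, hxi⟩ ⟨hy, hyi⟩
      (exists_geodesic hplus ⟨hx, hxi⟩ ⟨hy, hyi⟩) hx hy
  · exact carrier_cross hV hplus hminus hx hy hxi hyi
  · obtain ⟨w, hw⟩ := carrier_cross hV hplus hminus hy hx hyi hxi
    exact ⟨w.reverse, by rw [SimpleGraph.Walk.length_reverse, hw, hdist_comm]⟩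
  · exact walk_mono Set.inter_subset_left ⟨hx, hxi⟩ ⟨hy, hyi⟩
      (exists_geodesic hminus ⟨hx, hxi⟩ ⟨hy, hyi⟩) hx hy

lemma half_walk_pos (hV : IsPC V) :
    ∀ n {x y : Finset (Fin m)} (hx : x ∈ V) (hxi : i ∈ x) (hy : y ∈ V) (hyi : i ∈ y),
      hdist x y = n →
      ∃ w : ((cubeGraph m).induce {B ∈ V | i ∈ B}).Walk ⟨x, ⟨hx, hxi⟩⟩ ⟨y, ⟨hy, hyi⟩⟩,
        w.length = n := by
  intro n
  induction n with
  | zero =>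
      intro x y hx hxi hy hyi h0
      have hxy : x = y := hdist_eq_zero h0
      subst hxy
      exact ⟨SimpleGraph.Walk.nil, rfl⟩
  | succ n ih =>
      intro x y hx hxi hy hyi hn
      have hxy : x ≠ y := fun h => by rw [h, hdist_self] at hn; omega
      obtain ⟨x', hx'V, hd1, hd2⟩ := first_step hV hx hy hxy
      have hx'i : i ∈ x' := by
        by_contra hni
        have hba : x' = x.erase i := cross_eq hd1 hxi hni
        have hsub : hdist x y ≤ hdist x' y := by
          rw [hba]; exact Finset.card_le_card (subset_erase_side hxi hyi)
        omega
      obtain ⟨w, hw⟩ := ih hx'V hx'i hy hyi (by omega)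
      have hadj : ((cubeGraph m).induce {B ∈ V | i ∈ B}).Adj ⟨x, ⟨hx, hxi⟩⟩
          ⟨x', ⟨hx'V, hx'i⟩⟩ := hd1
      exact ⟨SimpleGraph.Walk.cons hadj w,
        by rw [SimpleGraph.Walk.length_cons, hw]⟩

lemma half_walk_neg (hV : IsPC V) :
    ∀ n {x y : Finset (Fin m)} (hx : x ∈ V) (hxi : i ∉ x) (hy : y ∈ V) (hyi : i ∉ y),
      hdist x y = n →
      ∃ w : ((cubeGraph m).induce {B ∈ V | i ∉ B}).Walk ⟨x, ⟨hx, hxi⟩⟩ ⟨y, ⟨hy, hyi⟩⟩,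
        w.length = n := by
  intro n
  induction n with
  | zero =>
      intro x y hx hxi hy hyi h0
      have hxy : x = y := hdist_eq_zero h0
      subst hxy
      exact ⟨SimpleGraph.Walk.nil, rfl⟩
  | succ n ih =>
      intro x y hx hxi hy hyi hn
      have hxy : x ≠ y := fun h => by rw [h, hdist_self] at hn; omega
      obtain ⟨x', hx'V, hd1, hd2⟩ := first_step hV hx hy hxy
      have hx'i : i ∉ x' := by
        intro hmem
        have hba : x' = insert i x := cross_eq' hd1 hxi hmem
        have hsub : hdist x y ≤ hdist x' y := by
          rw [hba]; exact Finset.card_le_card (subset_insert_side hxi hyi)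
        omega
      obtain ⟨w, hw⟩ := ih hx'V hx'i hy hyi (by omega)
      have hadj : ((cubeGraph m).induce {B ∈ V | i ∉ B}).Adj ⟨x, ⟨hx, hxi⟩⟩
          ⟨x', ⟨hx'V, hx'i⟩⟩ := hd1
      exact ⟨SimpleGraph.Walk.cons hadj w,
        by rw [SimpleGraph.Walk.length_cons, hw]⟩

lemma ext_pos_cross (hV : IsPC V)
    (hminus : IsPC (carrier V i ∩ {B | i ∉ B})) :
    ∀ n {x y : Finset (Fin m)} (hx : x ∈ V) (hxi : i ∈ x) (hy : y ∈ carrier V i)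
      (hyi : i ∉ y), hdist x y = n →
      ∃ w : ((cubeGraph m).induce ({B ∈ V | i ∈ B} ∪ (carrier V i ∩ {B | i ∉ B}))).Walk
        ⟨x, Or.inl ⟨hx, hxi⟩⟩ ⟨y, Or.inr ⟨hy, hyi⟩⟩, w.length = n := by
  intro n
  induction n with
  | zero =>
      intro x y hx hxi hy hyi h0
      have hxy : x = y := hdist_eq_zero h0
      subst hxy
      exact absurd hxi hyi
  | succ n ih =>
      intro x y hx hxi hy hyi hn
      have hxy : x ≠ y := fun h => hyi (h ▸ hxi)
      obtain ⟨x', hx'V, hd1, hd2⟩ := first_step hV hx hy.1 hxy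
      by_cases hx'i : i ∈ x'
      · obtain ⟨w, hw⟩ := ih hx'V hx'i hy hyi (by omega)
        have hadj : ((cubeGraph m).induce
            ({B ∈ V | i ∈ B} ∪ (carrier V i ∩ {B | i ∉ B}))).Adj
            ⟨x, Or.inl ⟨hx, hxi⟩⟩ ⟨x', Or.inl ⟨hx'V, hx'i⟩⟩ := hd1
        exact ⟨SimpleGraph.Walk.cons hadj w,
          by rw [SimpleGraph.Walk.length_cons, hw]⟩
      · have hba : x' = x.erase i := cross_eq hd1 hxi hx'i
        have hx'C : x' ∈ carrier V i :=
          ⟨hx'V, Or.inl (Or.inl ⟨hx'i, by rw [hba, Finset.insert_erase hxi]; exact hx⟩)⟩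
        obtain ⟨w, hw⟩ := walk_mono (S := carrier V i ∩ {B | i ∉ B})
          Set.subset_union_right ⟨hx'C, hx'i⟩ ⟨hy, hyi⟩
          (exists_geodesic hminus ⟨hx'C, hx'i⟩ ⟨hy, hyi⟩)
          (Or.inr ⟨hx'C, hx'i⟩) (Or.inr ⟨hy, hyi⟩)
        have hadj : ((cubeGraph m).induce
            ({B ∈ V | i ∈ B} ∪ (carrier V i ∩ {B | i ∉ B}))).Adj
            ⟨x, Or.inl ⟨hx, hxi⟩⟩ ⟨x', Or.inr ⟨hx'C, hx'i⟩⟩ := hd1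
        exact ⟨SimpleGraph.Walk.cons hadj w,
          by rw [SimpleGraph.Walk.length_cons, hw]; omega⟩

lemma ext_neg_cross (hV : IsPC V)
    (hplus : IsPC (carrier V i ∩ {B | i ∈ B})) :
    ∀ n {x y : Finset (Fin m)} (hx : x ∈ V) (hxi : i ∉ x) (hy : y ∈ carrier V i)
      (hyi : i ∈ y), hdist x y = n →
      ∃ w : ((cubeGraph m).induce ({B ∈ V | i ∉ B} ∪ (carrier V i ∩ {B | i ∈ B}))).Walk
        ⟨x, Or.inl ⟨hx, hxi⟩⟩ ⟨y, Or.inr ⟨hy, hyi⟩⟩, w.length = n := by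
  intro n
  induction n with
  | zero =>
      intro x y hx hxi hy hyi h0
      have hxy : x = y := hdist_eq_zero h0
      subst hxy
      exact absurd hyi hxi
  | succ n ih =>
      intro x y hx hxi hy hyi hn
      have hxy : x ≠ y := fun h => hxi (h ▸ hyi)
      obtain ⟨x', hx'V, hd1, hd2⟩ := first_step hV hx hy.1 hxy
      by_cases hx'i : i ∈ x'
      · have hba : x' = insert i x := cross_eq' hd1 hxi hx'i
        have hx'C : x' ∈ carrier V i :=
          ⟨hx'V, Or.inl (Or.inr ⟨hx'i, by rw [hba, Finset.erase_insert hxi]; exact hx⟩)⟩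
        obtain ⟨w, hw⟩ := walk_mono (S := carrier V i ∩ {B | i ∈ B})
          Set.subset_union_right ⟨hx'C, hx'i⟩ ⟨hy, hyi⟩
          (exists_geodesic hplus ⟨hx'C, hx'i⟩ ⟨hy, hyi⟩)
          (Or.inr ⟨hx'C, hx'i⟩) (Or.inr ⟨hy, hyi⟩)
        have hadj : ((cubeGraph m).induce
            ({B ∈ V | i ∉ B} ∪ (carrier V i ∩ {B | i ∈ B}))).Adj
            ⟨x, Or.inl ⟨hx, hxi⟩⟩ ⟨x', Or.inr ⟨hx'C, hx'i⟩⟩ := hd1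
        exact ⟨SimpleGraph.Walk.cons hadj w,
          by rw [SimpleGraph.Walk.length_cons, hw]; omega⟩
      · obtain ⟨w, hw⟩ := ih hx'V hx'i hy hyi (by omega)
        have hadj : ((cubeGraph m).induce
            ({B ∈ V | i ∉ B} ∪ (carrier V i ∩ {B | i ∈ B}))).Adj
            ⟨x, Or.inl ⟨hx, hxi⟩⟩ ⟨x', Or.inl ⟨hx'V, hx'i⟩⟩ := hd1
        exact ⟨SimpleGraph.Walk.cons hadj w,
          by rw [SimpleGraph.Walk.length_cons, hw]⟩

end Main

end Aux

/-- If the half-carriers of a Θ-class of a partial cube are isometric subgraphs,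
then so are the carrier and the two extended halfspaces. -/
theorem stmt18 (m : ℕ) (i : Fin m) (V : Set (Finset (Fin m))) (hV : IsPC V)
    (hplus : IsPC (carrier V i ∩ {B | i ∈ B}))
    (hminus : IsPC (carrier V i ∩ {B | i ∉ B})) :
    IsPC (carrier V i) ∧
      IsPC ({B ∈ V | i ∈ B} ∪ (carrier V i ∩ {B | i ∉ B})) ∧
      IsPC ({B ∈ V | i ∉ B} ∪ (carrier V i ∩ {B | i ∈ B})) := by
  refine ⟨?_, ?_, ?_⟩
  · rintro ⟨x, hx⟩ ⟨y, hy⟩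
    obtain ⟨w, hw⟩ := carrier_walk hV hplus hminus hx hy
    exact dist_of_walk w hw
  · rintro ⟨x, hx⟩ ⟨y, hy⟩
    by_cases hxi : i ∈ x <;> by_cases hyi : i ∈ y
    · have hxV : x ∈ V := hx.elim (fun h => h.1) (fun h => absurd hxi h.2)
      have hyV : y ∈ V := hy.elim (fun h => h.1) (fun h => absurd hyi h.2)
      obtain ⟨w, hw⟩ := walk_mono (S := {B ∈ V | i ∈ B}) Set.subset_union_left
        ⟨hxV, hxi⟩ ⟨hyV, hyi⟩
        (half_walk_pos hV (hdist x y) hxV hxi hyV hyi rfl) hx hy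
      exact dist_of_walk w hw
    · have hxV : x ∈ V := hx.elim (fun h => h.1) (fun h => absurd hxi h.2)
      have hyN : y ∈ carrier V i ∩ {B | i ∉ B} :=
        hy.elim (fun h => absurd h.2 hyi) (fun h => h)
      obtain ⟨w, hw⟩ := ext_pos_cross hV hminus (hdist x y) hxV hxi hyN.1 hyN.2 rfl
      exact dist_of_walk w hw
    · have hyV : y ∈ V := hy.elim (fun h => h.1) (fun h => absurd hyi h.2)
      have hxN : x ∈ carrier V i ∩ {B | i ∉ B} :=
        hx.elim (fun h => absurd h.2 hxi) (fun h => h)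
      obtain ⟨w, hw⟩ := ext_pos_cross hV hminus (hdist y x) hyV hyi hxN.1 hxN.2 rfl
      exact dist_of_walk w.reverse
        (by rw [SimpleGraph.Walk.length_reverse, hw, hdist_comm])
    · have hxN : x ∈ carrier V i ∩ {B | i ∉ B} :=
        hx.elim (fun h => absurd h.2 hxi) (fun h => h)
      have hyN : y ∈ carrier V i ∩ {B | i ∉ B} :=
        hy.elim (fun h => absurd h.2 hyi) (fun h => h)
      obtain ⟨w, hw⟩ := walk_mono (S := carrier V i ∩ {B | i ∉ B})
        Set.subset_union_right hxN hyN (exists_geodesic hminus hxN hyN) hx hy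
      exact dist_of_walk w hw
  · rintro ⟨x, hx⟩ ⟨y, hy⟩
    by_cases hxi : i ∈ x <;> by_cases hyi : i ∈ y
    · have hxN : x ∈ carrier V i ∩ {B | i ∈ B} :=
        hx.elim (fun h => absurd hxi h.2) (fun h => h)
      have hyN : y ∈ carrier V i ∩ {B | i ∈ B} :=
        hy.elim (fun h => absurd hyi h.2) (fun h => h)
      obtain ⟨w, hw⟩ := walk_mono (S := carrier V i ∩ {B | i ∈ B})
        Set.subset_union_right hxN hyN (exists_geodesic hplus hxN hyN) hx hy
      exact dist_of_walk w hw
    · have hyV : y ∈ V := hy.elim (fun h => h.1) (fun h => absurd h.2 hyi)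
      have hxN : x ∈ carrier V i ∩ {B | i ∈ B} :=
        hx.elim (fun h => absurd hxi h.2) (fun h => h)
      obtain ⟨w, hw⟩ := ext_neg_cross hV hplus (hdist y x) hyV hyi hxN.1 hxN.2 rfl
      exact dist_of_walk w.reverse
        (by rw [SimpleGraph.Walk.length_reverse, hw, hdist_comm])
    · have hxV : x ∈ V := hx.elim (fun h => h.1) (fun h => absurd h.2 hxi)
      have hyN : y ∈ carrier V i ∩ {B | i ∈ B} :=
        hy.elim (fun h => absurd hyi h.2) (fun h => h)
      obtain ⟨w, hw⟩ := ext_neg_cross hV hplus (hdist x y) hxV hxi hyN.1 hyN.2 rfl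
      exact dist_of_walk w hw
    · have hxV : x ∈ V := hx.elim (fun h => h.1) (fun h => absurd h.2 hxi)
      have hyV : y ∈ V := hy.elim (fun h => h.1) (fun h => absurd h.2 hyi)
      obtain ⟨w, hw⟩ := walk_mono (S := {B ∈ V | i ∉ B}) Set.subset_union_left
        ⟨hxV, hxi⟩ ⟨hyV, hyi⟩
        (half_walk_neg hV (hdist x y) hxV hxi hyV hyi rfl) hx hy
      exact dist_of_walk w hw
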